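/- Let n ≥ 2 and let A ∈ ℝ^{n×n} be symmetric nonnegative definite. Then the Kruskal rank of A is at least 2 (i.e., every column of A is nonzero and any two distinct columns of A are linearly independent) if and only if for every integer d ≥ n−1 the d-th Hadamard power A^∘d is positive definite. -/

import Mathlib

open Matrix Polynomial Finset

private lemma dotSelf_ne {m : Type*} [Fintype m] {c : m → ℝ} (hc : c ≠ 0) :
    c ⬝ᵥ c ≠ 0 := by
  obtain ⟨k, hk⟩ := Function.ne_iff.mp hc
  have h : (0:ℝ) < ∑ i, c i * c i :=
    Finset.sum_pos' (fun i _ => mul_self_nonneg _) ⟨k, Finset.mem_univ k, mul_self_pos.mpr hk⟩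
  simpa [dotProduct] using h.ne'

private lemma affine_zero_finite {a b : ℝ} (h : a ≠ 0 ∨ b ≠ 0) :
    {t : ℝ | a + t * b = 0}.Finite := by
  rcases eq_or_ne b 0 with hb | hb
  · have ha : a ≠ 0 := by rcases h with ha | hb'; exacts [ha, absurd hb hb']
    convert Set.finite_empty
    ext t; simp [hb, ha]
  · apply Set.Finite.subset (Set.finite_singleton (-a / b))
    intro t ht
    simp only [Set.mem_setOf_eq] at ht
    simp only [Set.mem_singleton_iff, eq_div_iff hb]
    linarith

private lemma exists_dot_ne_zero {m : Type*} [Fintype m] {ι : Type*} [DecidableEq ι]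
    (s : Finset ι) (c : ι → m → ℝ) (hc : ∀ k ∈ s, c k ≠ 0) :
    ∃ u : m → ℝ, ∀ k ∈ s, c k ⬝ᵥ u ≠ 0 := by
  induction s using Finset.induction_on with
  | empty => exact ⟨0, by simp⟩
  | @insert a s ha ih =>
    obtain ⟨u, hu⟩ := ih fun k hk => hc k (Finset.mem_insert_of_mem hk)
    have hca : c a ≠ 0 := hc a (Finset.mem_insert_self a s)
    have hBad : ({t : ℝ | c a ⬝ᵥ u + t * (c a ⬝ᵥ c a) = 0} ∪
        ⋃ k ∈ s, {t : ℝ | c k ⬝ᵥ u + t * (c k ⬝ᵥ c a) = 0}).Finite := by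
      refine Set.Finite.union (affine_zero_finite (Or.inr (dotSelf_ne hca))) ?_
      exact Set.Finite.biUnion s.finite_toSet
        (fun k hk => affine_zero_finite (Or.inl (hu k hk)))
    obtain ⟨t, ht⟩ := hBad.infinite_compl.nonempty
    refine ⟨u + t • c a, ?_⟩
    intro k hk
    have hdot : ∀ k', c k' ⬝ᵥ (u + t • c a) = c k' ⬝ᵥ u + t * (c k' ⬝ᵥ c a) := by
      intro k'; simp [dotProduct_add, dotProduct_smul, smul_eq_mul]
    rw [hdot]
    rcases Finset.mem_insert.mp hk with rfl | hks
    · intro h0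
      exact ht (Or.inl h0)
    · intro h0
      exact ht (Or.inr (Set.mem_biUnion hks h0))


private lemma coeff_one_add_C_mul_X_pow (s : ℝ) (d r : ℕ) (hrd : r ≤ d) :
    ((1 + Polynomial.C s * Polynomial.X) ^ d).coeff r = s ^ r * d.choose r := by
  rw [add_comm, add_pow, Polynomial.finset_sum_coeff]
  have hterm : ∀ k ∈ Finset.range (d + 1),
      ((Polynomial.C s * Polynomial.X) ^ k * 1 ^ (d - k) * (d.choose k : ℝ[X])).coeff r
        = if k = r then s ^ r * d.choose r else 0 := by
    intro k hk
    rw [one_pow, mul_one, mul_pow, ← Polynomial.C_pow, ← Polynomial.C_eq_natCast, mul_assoc]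
    simp only [Polynomial.coeff_C_mul, Polynomial.coeff_mul_C, Polynomial.coeff_X_pow]
    split_ifs with h1 h2 h2
    · subst h1; ring
    · exact absurd h1.symm h2
    · exact absurd h2.symm h1
    · ring
  rw [Finset.sum_congr rfl hterm, Finset.sum_ite_eq' (Finset.range (d + 1))]
  simp [Nat.lt_succ_of_le hrd]


private lemma dot_pow_expand {n d : ℕ} (a b : Fin n → ℝ) :
    (a ⬝ᵥ b) ^ d = ∑ f ∈ Fintype.piFinset (fun _ : Fin d => (Finset.univ : Finset (Fin n))),
      (∏ t, a (f t)) * (∏ t, b (f t)) := by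
  have h1 : (a ⬝ᵥ b) ^ d = ∏ _t : Fin d, (∑ k, a k * b k) := by
    simp [dotProduct, Finset.prod_const]
  rw [h1, Finset.prod_univ_sum]
  exact Finset.sum_congr rfl fun f _ => by rw [Finset.prod_mul_distrib]

private lemma key {n d : ℕ} (hd : n - 1 ≤ d)
    (v : Fin n → (Fin n → ℝ)) (hv0 : ∀ i, v i ≠ 0)
    (hvp : ∀ i j, i ≠ j → ∀ c : ℝ, v i ≠ c • v j)
    (x : Fin n → ℝ)
    (h : ∀ y : Fin n → ℝ, ∑ i, x i * (v i ⬝ᵥ y) ^ d = 0) :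
    x = 0 := by
  classical
  obtain ⟨z, hz⟩ := exists_dot_ne_zero Finset.univ v (fun k _ => hv0 k)
  have hz' : ∀ i, v i ⬝ᵥ z ≠ 0 := fun i => hz i (Finset.mem_univ i)
  set w : Fin n → (Fin n → ℝ) := fun i => (v i ⬝ᵥ z)⁻¹ • v i with hw
  have hvw : ∀ i, v i = (v i ⬝ᵥ z) • w i := fun i => (smul_inv_smul₀ (hz' i) (v i)).symm
  have hwne : ∀ i j, i ≠ j → w i - w j ≠ 0 := by
    intro i j hij h0
    have hwij : w i = w j := by rwa [sub_eq_zero] at h0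
    refine hvp i j hij ((v i ⬝ᵥ z) * (v j ⬝ᵥ z)⁻¹) ?_
    calc v i = (v i ⬝ᵥ z) • w i := hvw i
      _ = (v i ⬝ᵥ z) • ((v j ⬝ᵥ z)⁻¹ • v j) := by rw [hwij]
      _ = ((v i ⬝ᵥ z) * (v j ⬝ᵥ z)⁻¹) • v j := smul_smul _ _ _
  obtain ⟨u, hu⟩ := exists_dot_ne_zero
      (Finset.univ.filter fun p : Fin n × Fin n => p.1 ≠ p.2)
      (fun p => w p.1 - w p.2)
      (by intro p hp
          exact hwne p.1 p.2 (by simpa using (Finset.mem_filter.mp hp).2))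
  set sf : Fin n → ℝ := fun i => w i ⬝ᵥ u with hsf
  have hs_inj : Function.Injective sf := by
    intro i j hij
    by_contra hne
    apply hu (i, j) (by simp [hne])
    simp [sub_dotProduct, hsf] at hij ⊢
    linarith [hij]
  set x' : Fin n → ℝ := fun i => x i * (v i ⬝ᵥ z) ^ d with hx'
  have heq : ∀ t : ℝ, ∑ i, x' i * (1 + sf i * t) ^ d = 0 := by
    intro t
    have := h (z + t • u)
    have hrw : ∀ i, v i ⬝ᵥ (z + t • u) = (v i ⬝ᵥ z) * (1 + sf i * t) := by
      intro i
      have h2 : v i ⬝ᵥ u = (v i ⬝ᵥ z) * sf i := by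
        conv_lhs => rw [hvw i]
        simp [smul_dotProduct, smul_eq_mul, hsf]
      simp [dotProduct_add, dotProduct_smul, smul_eq_mul, h2]
      ring
    calc ∑ i, x' i * (1 + sf i * t) ^ d
        = ∑ i, x i * (v i ⬝ᵥ (z + t • u)) ^ d := by
          refine Finset.sum_congr rfl fun i _ => ?_
          rw [hrw, mul_pow, hx']; ring
      _ = 0 := h _
  set P : Polynomial ℝ := ∑ i, Polynomial.C (x' i) * (1 + Polynomial.C (sf i) * Polynomial.X) ^ d with hP
  have hP0 : P = 0 := by
    apply Polynomial.funext
    intro t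
    simp only [hP, Polynomial.eval_finset_sum, Polynomial.eval_mul, Polynomial.eval_pow,
      Polynomial.eval_add, Polynomial.eval_one, Polynomial.eval_C, Polynomial.eval_X,
      Polynomial.eval_zero]
    exact heq t
  have hcoeff : ∀ r : ℕ, r ≤ d → ∑ i, x' i * sf i ^ r = 0 := by
    intro r hrd
    have h1 : P.coeff r = ∑ i, x' i * (sf i ^ r * d.choose r) := by
      rw [hP, Polynomial.finset_sum_coeff]
      refine Finset.sum_congr rfl fun i _ => ?_
      rw [Polynomial.coeff_C_mul, coeff_one_add_C_mul_X_pow _ _ _ hrd]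
    have h2 : P.coeff r = 0 := by rw [hP0]; simp
    rw [h1] at h2
    have h3 : (∑ i, x' i * sf i ^ r) * (d.choose r : ℝ) = 0 := by
      rw [Finset.sum_mul]; rw [← h2]
      exact Finset.sum_congr rfl fun i _ => by ring
    have h4 : (d.choose r : ℝ) ≠ 0 := by
      exact_mod_cast (Nat.choose_pos hrd).ne'
    exact (mul_eq_zero.mp h3).resolve_right h4
  have hx'0 : x' = 0 := by
    have hdet : ((Matrix.vandermonde sf)ᵀ).det ≠ 0 := by
      rw [Matrix.det_transpose]
      exact Matrix.det_vandermonde_ne_zero_iff.mpr hs_inj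
    apply Matrix.eq_zero_of_mulVec_eq_zero hdet
    ext r
    have : (r : ℕ) ≤ d := le_trans (by omega : (r:ℕ) ≤ n - 1) hd
    calc ((Matrix.vandermonde sf)ᵀ *ᵥ x') r
        = ∑ i, sf i ^ (r : ℕ) * x' i := by
          simp [Matrix.mulVec, dotProduct, Matrix.vandermonde, Matrix.transpose_apply]
      _ = ∑ i, x' i * sf i ^ (r : ℕ) := Finset.sum_congr rfl fun i _ => mul_comm _ _
      _ = 0 := hcoeff _ this
  funext i
  have := congrFun hx'0 i
  simp only [hx', Pi.zero_apply] at this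
  have hnz : (v i ⬝ᵥ z) ^ d ≠ 0 := pow_ne_zero _ (hz' i)
  simpa [Pi.zero_apply] using (mul_eq_zero.mp this).resolve_right hnz


/-- Let `n ≥ 2` and let `A ∈ ℝ^{n×n}` be symmetric nonnegative definite. The
Kruskal rank of `A` is at least `2` (i.e. every column of `A` is nonzero and any two distinct
columns of `A` are linearly independent) if and only if for every integer `d ≥ n − 1` the
`d`-th Hadamard power `A^∘d` is positive definite. -/
theorem kruskalRank_ge_two_iff_hadamard_powers_posDef (n : ℕ) (hn : 2 ≤ n)
    (A : Matrix (Fin n) (Fin n) ℝ) (hA : A.PosSemidef) :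
    ((∀ j : Fin n, (fun i => A i j) ≠ 0) ∧
        ∀ j₁ j₂ : Fin n, j₁ ≠ j₂ →
          LinearIndependent ℝ ![fun i => A i j₁, fun i => A i j₂]) ↔
      ∀ d : ℕ, n - 1 ≤ d → (Matrix.of fun i j => A i j ^ d).PosDef := by
  classical
  have hsymm : ∀ i j, A j i = A i j := fun i j => by
    simpa using hA.1.apply i j
  constructor
  · rintro ⟨h1, h2⟩ d hd
    obtain ⟨B, hB⟩ : ∃ B : Matrix (Fin n) (Fin n) ℝ, A = Bᴴ * B := by
      open scoped MatrixOrder in exact CStarAlgebra.nonneg_iff_eq_star_mul_self.mp hA.nonneg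
    set v : Fin n → (Fin n → ℝ) := fun j k => B k j with hv
    have hAv : ∀ i j, A i j = v i ⬝ᵥ v j := by
      intro i j
      rw [hB]
      simp [Matrix.mul_apply, Matrix.conjTranspose_apply, dotProduct, hv]
    have hv0 : ∀ j, v j ≠ 0 := by
      intro j hj0
      apply h1 j
      funext i
      simp [hAv i j, hj0]
    have hvp : ∀ i j, i ≠ j → ∀ c : ℝ, v i ≠ c • v j := by
      intro i j hij c hc
      have hcol : ∀ k, A k i = c * A k j := by
        intro k
        rw [hAv k i, hAv k j, hc, dotProduct_smul, smul_eq_mul]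
      have hli := (LinearIndependent.pair_iff.mp (h2 i j hij)) 1 (-c)
      have h10 : (1 : ℝ) = 0 ∧ (-c : ℝ) = 0 := by
        apply hli
        funext k
        simp [hcol k]
      exact one_ne_zero h10.1
    refine Matrix.PosDef.of_dotProduct_mulVec_pos ?_ ?_
    · -- Hermitian
      ext i j
      simp [Matrix.conjTranspose_apply, hsymm i j]
    · intro x hx
      set F := Fintype.piFinset (fun _ : Fin d => (Finset.univ : Finset (Fin n))) with hF
      set T : (Fin d → Fin n) → ℝ := fun f => ∑ i, x i * ∏ t, v i (f t) with hT
      have Qeq : star x ⬝ᵥ ((Matrix.of fun i j => A i j ^ d) *ᵥ x) = ∑ f ∈ F, (T f) ^ 2 := by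
        rw [star_trivial]
        calc x ⬝ᵥ ((Matrix.of fun i j => A i j ^ d) *ᵥ x)
            = ∑ i, ∑ j, (x i * x j) * (v i ⬝ᵥ v j) ^ d := by
              simp only [dotProduct, Matrix.mulVec, Matrix.of_apply, Finset.mul_sum]
              refine Finset.sum_congr rfl fun i _ => Finset.sum_congr rfl fun j _ => ?_
              rw [hAv]; simp only [dotProduct]; ring
          _ = ∑ i, ∑ j, ∑ f ∈ F, (x i * ∏ t, v i (f t)) * (x j * ∏ t, v j (f t)) := by
              refine Finset.sum_congr rfl fun i _ => Finset.sum_congr rfl fun j _ => ?_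
              rw [dot_pow_expand, Finset.mul_sum]
              exact Finset.sum_congr rfl fun f _ => by ring
          _ = ∑ f ∈ F, ∑ i, ∑ j, (x i * ∏ t, v i (f t)) * (x j * ∏ t, v j (f t)) := by
              rw [show (∑ i, ∑ j, ∑ f ∈ F, (x i * ∏ t, v i (f t)) * (x j * ∏ t, v j (f t)))
                  = ∑ i, ∑ f ∈ F, ∑ j, (x i * ∏ t, v i (f t)) * (x j * ∏ t, v j (f t))
                from Finset.sum_congr rfl fun i _ => Finset.sum_comm]
              exact Finset.sum_comm
          _ = ∑ f ∈ F, (T f) ^ 2 := by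
              refine Finset.sum_congr rfl fun f _ => ?_
              rw [sq, hT, Finset.sum_mul_sum]
      rw [Qeq]
      have hnonneg : ∀ f ∈ F, (0:ℝ) ≤ T f ^ 2 := fun f _ => sq_nonneg _
      rcases (Finset.sum_nonneg hnonneg).lt_or_eq with hlt | heq0
      · exact hlt
      · exfalso
        have hT0 : ∀ f ∈ F, T f = 0 := by
          intro f hf
          have h2f := (Finset.sum_eq_zero_iff_of_nonneg hnonneg).mp heq0.symm f hf
          exact pow_eq_zero_iff two_ne_zero |>.mp h2f
        have hy : ∀ y : Fin n → ℝ, ∑ i, x i * (v i ⬝ᵥ y) ^ d = 0 := by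
          intro y
          calc ∑ i, x i * (v i ⬝ᵥ y) ^ d
              = ∑ i, ∑ f ∈ F, (x i * ∏ t, v i (f t)) * ∏ t, y (f t) := by
                refine Finset.sum_congr rfl fun i _ => ?_
                rw [dot_pow_expand, Finset.mul_sum]
                exact Finset.sum_congr rfl fun f _ => by ring
            _ = ∑ f ∈ F, T f * ∏ t, y (f t) := by
                rw [Finset.sum_comm]
                refine Finset.sum_congr rfl fun f _ => ?_
                rw [hT, Finset.sum_mul]
            _ = 0 := Finset.sum_eq_zero fun f hf => by rw [hT0 f hf, zero_mul]
        exact hx (key hd v hv0 hvp x hy)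
  · intro hP
    have hd1 : 1 ≤ n - 1 := by omega
    have hcol : ∀ j : Fin n, (fun i => A i j) ≠ 0 := by
      intro j hj0
      have hpd := hP (n - 1) le_rfl
      have hx : (Pi.single j 1 : Fin n → ℝ) ≠ 0 := by
        intro h0
        have := congrFun h0 j
        simp at this
      have hpos := hpd.dotProduct_mulVec_pos hx
      rw [star_trivial] at hpos
      have hAjj : A j j = 0 := congrFun hj0 j
      have : (Matrix.of fun i j => A i j ^ (n-1)) *ᵥ Pi.single j 1 = fun i => A i j ^ (n-1) := by
        funext i
        rw [Matrix.mulVec_single]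
        simp
      rw [this] at hpos
      have : (Pi.single j 1 : Fin n → ℝ) ⬝ᵥ (fun i => A i j ^ (n-1)) = A j j ^ (n-1) := by
        simp [single_dotProduct]
      rw [this, hAjj, zero_pow (by omega : n - 1 ≠ 0)] at hpos
      exact lt_irrefl 0 hpos
    refine ⟨hcol, ?_⟩
    intro j₁ j₂ hne
    rw [LinearIndependent.pair_iff]
    intro s t hst
    have hst' : ∀ i, s * A i j₁ + t * A i j₂ = 0 := by
      intro i
      have := congrFun hst i
      simpa using this
    rcases eq_or_ne s 0 with hs | hs
    · rcases eq_or_ne t 0 with ht | ht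
      · exact ⟨hs, ht⟩
      · exfalso
        apply hcol j₂
        funext i
        have := hst' i
        rw [hs, zero_mul, zero_add] at this
        exact (mul_eq_zero.mp this).resolve_left ht
    · exfalso
      set c : ℝ := -t / s with hc
      have hcoli : ∀ i, A i j₁ = c * A i j₂ := by
        intro i
        have := hst' i
        rw [hc, div_mul_eq_mul_div, eq_div_iff hs]
        linarith
      set d := n - 1 with hdd
      have hpd := hP d le_rfl
      set M := Matrix.of fun i j => A i j ^ d with hM
      set x : Fin n → ℝ := Pi.single j₁ 1 + Pi.single j₂ (-(c ^ d)) with hxdef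
      have hx : x ≠ 0 := by
        intro h0
        have := congrFun h0 j₁
        simp [hxdef, Pi.single_eq_of_ne hne] at this
      have hMx : M *ᵥ x = 0 := by
        rw [hxdef, Matrix.mulVec_add]
        funext i
        simp only [Matrix.mulVec_single, Pi.add_apply, Pi.zero_apply]
        have : M i j₁ = c ^ d * M i j₂ := by
          simp only [hM, Matrix.of_apply]
          rw [hcoli i, mul_pow]
        simp only [Pi.smul_apply, Matrix.col_apply, op_smul_eq_mul]
        rw [this]
        ring
      have hpos := hpd.dotProduct_mulVec_pos hx
      rw [star_trivial, hMx, dotProduct_zero] at hpos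
      exact lt_irrefl 0 hpos
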